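/- Let (M,g,ξ,η,Φ,T) be a T-contact metric manifold. Then the tensor N^{(2)}(X,Y) := (L_{Φ(X)} η)(Y) − (L_{Φ(Y)} η)(X) vanishes identically, and ξ ⌟ d^T η = ξ ⌟ dη = 0. -/

import Mathlib

/-- An abstract model of a smooth Riemannian manifold `(M,g)`: `C` is the algebra of
smooth real-valued functions on `M` and `V` is the `C`-module of smooth vector fields,
together with the directional-derivative action `act` of vector fields on functions,
the Lie bracket of vector fields, and the Riemannian metric `g`. -/
structure VFCalc (C V : Type) [CommRing C] [Algebra ℝ C]
    [AddCommGroup V] [Module C V] : Type where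
  /-- the derivative `X f` of a function `f` along a vector field `X` -/
  act : V → C → C
  /-- the Lie bracket `[X, Y]` of vector fields -/
  bracket : V → V → V
  /-- the Riemannian metric `g(X, Y)` -/
  g : V → V → C
  act_mul : ∀ X f₁ f₂, act X (f₁ * f₂) = act X f₁ * f₂ + f₁ * act X f₂
  act_addF : ∀ X f₁ f₂, act X (f₁ + f₂) = act X f₁ + act X f₂
  act_const : ∀ X (a : ℝ), act X (algebraMap ℝ C a) = 0
  act_addV : ∀ X Y f, act (X + Y) f = act X f + act Y f
  act_smulV : ∀ (f : C) (X : V) (h : C), act (f • X) h = f * act X h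
  bracket_antisymm : ∀ X Y, bracket X Y = -bracket Y X
  bracket_addL : ∀ X Y Z, bracket (X + Y) Z = bracket X Z + bracket Y Z
  bracket_leibniz : ∀ X (f : C) Y, bracket X (f • Y) = act X f • Y + f • bracket X Y
  bracket_act : ∀ X Y f, act (bracket X Y) f = act X (act Y f) - act Y (act X f)
  bracket_jacobi : ∀ X Y Z,
    bracket X (bracket Y Z) + bracket Y (bracket Z X) + bracket Z (bracket X Y) = 0
  g_symm : ∀ X Y, g X Y = g Y X
  g_addL : ∀ X X' Y, g (X + X') Y = g X Y + g X' Y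
  g_smulL : ∀ (f : C) X Y, g (f • X) Y = f * g X Y
  g_nondeg : ∀ X, (∀ Z, g X Z = 0) → X = 0

/-- `T` is a 3-form: `C`-multilinear and totally skew-symmetric. -/
def VFCalc.IsThreeForm {C V : Type} [CommRing C] [Algebra ℝ C]
    [AddCommGroup V] [Module C V] (_D : VFCalc C V) (T : V → V → V → C) : Prop :=
  (∀ X X' Y Z, T (X + X') Y Z = T X Y Z + T X' Y Z) ∧
  (∀ (f : C) X Y Z, T (f • X) Y Z = f * T X Y Z) ∧
  (∀ X Y Z, T X Y Z = -T Y X Z) ∧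
  (∀ X Y Z, T X Y Z = -T X Z Y)

namespace VFCalc

variable {C V : Type} [CommRing C] [Algebra ℝ C] [AddCommGroup V] [Module C V]
variable (D : VFCalc C V)

/-- `nab` is an affine connection on vector fields. -/
def IsConnection (nab : V → V → V) : Prop :=
  (∀ X X' Y, nab (X + X') Y = nab X Y + nab X' Y) ∧
  (∀ (f : C) X Y, nab (f • X) Y = f • nab X Y) ∧
  (∀ X Y Y', nab X (Y + Y') = nab X Y + nab X Y') ∧
  (∀ X (f : C) Y, nab X (f • Y) = D.act X f • Y + f • nab X Y)

/-- `nab` is the Levi-Civita connection of `g`: a torsion-free metric connection. -/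
def IsLeviCivita (nab : V → V → V) : Prop :=
  D.IsConnection nab ∧
  (∀ X Y Z, D.act X (D.g Y Z) = D.g (nab X Y) Z + D.g Y (nab X Z)) ∧
  (∀ X Y, nab X Y - nab Y X = D.bracket X Y)

/-- `nabT` is the metric connection with totally skew-symmetric torsion `T`:
`g(∇ᵀ_X Y, Z) = g(∇ᵍ_X Y, Z) + (1/2) T(X,Y,Z)` where `nabG` is the Levi-Civita
connection. -/
def IsTorsionConnection (T : V → V → V → C) (nabG nabT : V → V → V) : Prop :=
  D.IsConnection nabT ∧
  ∀ X Y Z, D.g (nabT X Y) Z = D.g (nabG X Y) Z + (1 / 2 : ℝ) • T X Y Z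

/-- `ξ` is a Killing vector field: the Lie derivative of the metric along `ξ`
vanishes. -/
def IsKilling (ξ : V) : Prop :=
  ∀ X Y, D.act ξ (D.g X Y) = D.g (D.bracket ξ X) Y + D.g X (D.bracket ξ Y)

/-- `e` is a (global) orthonormal frame of vector fields. -/
def IsOrthonormalFrame {ι : Type} [Fintype ι] [DecidableEq ι] (e : ι → V) : Prop :=
  (∀ a b, D.g (e a) (e b) = if a = b then 1 else 0) ∧
  (∀ X, X = ∑ a, D.g X (e a) • e a)

/-- the exterior derivative of a 1-form -/
def dOne (η : V → C) (X Y : V) : C :=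
  D.act X (η Y) - D.act Y (η X) - η (D.bracket X Y)

/-- the exterior derivative of a 2-form -/
def dTwoForm (ω : V → V → C) (X Y Z : V) : C :=
  D.act X (ω Y Z) - D.act Y (ω X Z) + D.act Z (ω X Y)
    - ω (D.bracket X Y) Z + ω (D.bracket X Z) Y - ω (D.bracket Y Z) X

/-- the torsion exterior derivative `dᵀη = dη − Σ_a (e_a ⌟ T) ∧ (e_a ⌟ η)` of a
1-form `η`, relative to an orthonormal frame `e`. -/
def dTOne {ι : Type} [Fintype ι] (e : ι → V) (T : V → V → V → C) (η : V → C)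
    (X Y : V) : C :=
  D.dOne η X Y - ∑ a, η (e a) * T (e a) X Y

/-- the covariant derivative `(∇_X η)(Y)` of a 1-form -/
def covOne (nab : V → V → V) (η : V → C) (X Y : V) : C :=
  D.act X (η Y) - η (nab X Y)

/-- the covariant derivative `(∇_X ω)(Y,Z)` of a 2-form -/
def covTwo (nab : V → V → V) (ω : V → V → C) (X Y Z : V) : C :=
  D.act X (ω Y Z) - ω (nab X Y) Z - ω Y (nab X Z)

/-- the curvature operator `R(X,Y)Z = ∇_X∇_Y Z − ∇_Y∇_X Z − ∇_{[X,Y]} Z` -/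
def curv (nab : V → V → V) (X Y Z : V) : V :=
  nab X (nab Y Z) - nab Y (nab X Z) - nab (D.bracket X Y) Z

end VFCalc

/-- On a T-contact metric manifold `(M,g,ξ,η,Φ,T)`, the tensor
`N⁽²⁾(X,Y) = (L_{Φ(X)} η)(Y) − (L_{Φ(Y)} η)(X)` vanishes identically, and
`ξ ⌟ dᵀη = ξ ⌟ dη = 0`. -/
theorem statement8 {C V : Type} [CommRing C] [Algebra ℝ C]
    [AddCommGroup V] [Module C V] (D : VFCalc C V)
    {ι : Type} [Fintype ι] [DecidableEq ι] (e : ι → V)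
    (he : D.IsOrthonormalFrame e)
    (ξ : V) (η : V → C) (Φ : V → V) (T : V → V → V → C)
    -- almost contact metric structure
    (hη : ∀ X, η X = D.g ξ X) (hηξ : η ξ = 1)
    (hΦadd : ∀ X Y, Φ (X + Y) = Φ X + Φ Y)
    (hΦsmul : ∀ (f : C) (X : V), Φ (f • X) = f • Φ X)
    (hΦ2 : ∀ X, Φ (Φ X) = -X + η X • ξ)
    (hΦg : ∀ X Y, D.g (Φ X) (Φ Y) = D.g X Y - η X * η Y)
    -- the 3-form `T` and its compatibility with `Φ`
    (hT : D.IsThreeForm T)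
    (hTcond : ∀ X Y Z, T X Y Z = T X (Φ Y) (Φ Z) + T (Φ X) Y (Φ Z) + T (Φ X) (Φ Y) Z)
    -- T-contact conditions: `dᵀη = 2ω` and `ξ ⌟ dω = 0`, `ω(X,Y) = g(Φ(X),Y)`
    (hcontact : ∀ X Y, D.dTOne e T η X Y = 2 * D.g (Φ X) Y)
    (hdω : ∀ X Y, D.dTwoForm (fun X Y => D.g (Φ X) Y) ξ X Y = 0) :
    (∀ X Y, (D.act (Φ X) (η Y) - η (D.bracket (Φ X) Y))
        - (D.act (Φ Y) (η X) - η (D.bracket (Φ Y) X)) = 0)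
      ∧ (∀ X, D.dTOne e T η ξ X = 0) ∧ (∀ X, D.dOne η ξ X = 0) := by
  classical
  obtain ⟨hTaddL, hTsmulL, hTswap12, hTswap23⟩ := hT
  -- invertibility of 2
  have hhalfC : ∀ c : C, c + c = 0 → c = 0 := by
    intro c hc
    have h2 : (2 : C) * c = 0 := by linear_combination hc
    have h3 : (algebraMap ℝ C (1/2)) * ((2:C) * c) = c := by
      rw [show (2:C) = algebraMap ℝ C 2 from (map_ofNat _ 2).symm, ← mul_assoc, ← map_mul]
      norm_num
    rw [h2, mul_zero] at h3
    exact h3.symm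
  -- metric basics
  have hg0L : ∀ X, D.g 0 X = 0 := by
    intro X
    have h := D.g_smulL 0 0 X
    simpa using h
  have hg0R : ∀ X, D.g X 0 = 0 := fun X => by rw [D.g_symm]; exact hg0L X
  have hgnegL : ∀ X Y, D.g (-X) Y = - D.g X Y := by
    intro X Y
    rw [show (-X : V) = (-1 : C) • X from (neg_one_smul C X).symm, D.g_smulL]
    ring
  have hη0 : η (0 : V) = 0 := by rw [hη, hg0R]
  have hact0 : ∀ X, D.act X (0:C) = 0 := by
    intro X
    have h := D.act_const X 0
    simpa using h
  have hhalfV : ∀ v : V, v + v = 0 → v = 0 := by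
    intro v hv
    have h2 : ((2:C)) • v = 0 := by rw [two_smul]; exact hv
    have h3 : (algebraMap ℝ C (1/2)) • ((2:C) • v) = v := by
      rw [smul_smul, show (2:C) = algebraMap ℝ C 2 from (map_ofNat _ 2).symm, ← map_mul]
      norm_num
    rw [h2, smul_zero] at h3
    exact h3.symm
  have hbrxx : D.bracket ξ ξ = 0 := by
    apply hhalfV
    have h := D.bracket_antisymm ξ ξ
    nth_rewrite 1 [h]
    exact neg_add_cancel _
  -- T basics
  have hT12eq : ∀ X Y, T X X Y = 0 := by
    intro X Y
    apply hhalfC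
    nth_rewrite 1 [hTswap12 X X Y]
    exact neg_add_cancel _
  have hT23eq : ∀ X Y, T X Y Y = 0 := by
    intro X Y
    apply hhalfC
    nth_rewrite 1 [hTswap23 X Y Y]
    exact neg_add_cancel _
  have hT0L : ∀ X Y, T 0 X Y = 0 := by
    intro X Y
    have h := hTsmulL 0 0 X Y
    simpa using h
  have hTaddM : ∀ X Y Y' Z, T X (Y + Y') Z = T X Y Z + T X Y' Z := by
    intro X Y Y' Z
    rw [hTswap12, hTaddL, hTswap12 Y X Z, hTswap12 Y' X Z]
    ring
  have hTsmulM : ∀ (f : C) X Y Z, T X (f • Y) Z = f * T X Y Z := by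
    intro f X Y Z
    rw [hTswap12, hTsmulL, hTswap12 Y X Z]
    ring
  have hTnegM : ∀ X Y Z, T X (-Y) Z = - T X Y Z := by
    intro X Y Z
    rw [show (-Y : V) = (-1 : C) • Y from (neg_one_smul C Y).symm, hTsmulM]
    ring
  -- sum formula
  have hTsum : ∀ (f : ι → C) (X Y : V),
      T (∑ a, f a • e a) X Y = ∑ a, f a * T (e a) X Y := by
    intro f X Y
    have key : ∀ s : Finset ι,
        T (∑ a ∈ s, f a • e a) X Y = ∑ a ∈ s, f a * T (e a) X Y := by
      intro s
      induction s using Finset.induction_on with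
      | empty => simpa using hT0L X Y
      | insert _ _ hnot ih =>
          rw [Finset.sum_insert hnot, Finset.sum_insert hnot, hTaddL, hTsmulL, ih]
    exact key _
  have hTξ : ∀ X Y, T ξ X Y = ∑ a, η (e a) * T (e a) X Y := by
    intro X Y
    conv_lhs => rw [he.2 ξ]
    rw [hTsum]
    exact Finset.sum_congr rfl fun a _ => by rw [hη]
  -- g (Φ ξ) ξ = 0 from the contact condition at (ξ, ξ)
  have hcon := hcontact ξ ξ
  have hzero : D.dTOne e T η ξ ξ = 0 := by
    simp only [VFCalc.dTOne, VFCalc.dOne, hbrxx, hη0]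
    rw [Finset.sum_eq_zero (fun a _ => by rw [hT23eq, mul_zero])]
    ring
  rw [hzero] at hcon
  have hc : D.g (Φ ξ) ξ = 0 := hhalfC _ (by linear_combination -hcon)
  -- Φ basics
  have hΦ0 : Φ (0 : V) = 0 := by
    have h := hΦsmul 0 0
    simpa using h
  have hΦneg : ∀ X, Φ (-X) = -Φ X := by
    intro X
    rw [show (-X : V) = (-1 : C) • X from (neg_one_smul C X).symm, hΦsmul, neg_one_smul]
  have hΦξ2 : Φ (Φ ξ) = 0 := by
    rw [hΦ2, hηξ, one_smul]
    exact neg_add_cancel ξ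
  have hΦξeq : Φ ξ = η (Φ ξ) • ξ := by
    have h := hΦ2 (Φ ξ)
    rw [hΦξ2, hΦ0] at h
    have h2 : η (Φ ξ) • ξ - Φ ξ = 0 := by
      rw [sub_eq_add_neg, add_comm]
      exact h.symm
    exact (sub_eq_zero.mp h2).symm
  have hgξξ : D.g ξ ξ = 1 := by rw [← hη]; exact hηξ
  have hc2 : η (Φ ξ) = 0 := by rw [hη, D.g_symm]; exact hc
  have hΦξ : Φ ξ = 0 := by rw [hΦξeq, hc2, zero_smul]
  have hηΦ : ∀ X, η (Φ X) = 0 := by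
    intro X
    have h1 := hΦ2 (Φ X)
    have h2 : Φ (Φ (Φ X)) = -Φ X := by
      rw [hΦ2 X, hΦadd, hΦsmul, hΦξ, smul_zero, add_zero, hΦneg]
    rw [h2] at h1
    have h3 : η (Φ X) • ξ = 0 := by
      have h4 : -Φ X + (0:V) = -Φ X + η (Φ X) • ξ := by rw [add_zero]; exact h1
      exact (add_left_cancel h4).symm
    have h5 : D.g (η (Φ X) • ξ) ξ = 0 := by rw [h3]; exact hg0L ξ
    rw [D.g_smulL, hgξξ, mul_one] at h5
    exact h5
  -- dη = 2ω + ξ ⌟ T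
  have hdη : ∀ X Y, D.dOne η X Y = 2 * D.g (Φ X) Y + T ξ X Y := by
    intro X Y
    have h := hcontact X Y
    simp only [VFCalc.dTOne] at h
    rw [← hTξ] at h
    linear_combination h
  have hTk : ∀ X Y, T ξ X Y = T ξ (Φ X) (Φ Y) := by
    intro X Y
    have h := hTcond ξ X Y
    simp only [hΦξ, hT0L, add_zero] at h
    exact h
  have hTmove : ∀ X Y, T ξ (Φ X) Y = -T ξ X (Φ Y) := by
    intro X Y
    rw [hTk (Φ X) Y, hΦ2, hTaddM, hTnegM, hTsmulM, hT12eq]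
    ring
  refine ⟨?_, ?_, ?_⟩
  · intro X Y
    have e1 : D.act (Φ X) (η Y) - η (D.bracket (Φ X) Y) = D.dOne η (Φ X) Y := by
      simp only [VFCalc.dOne, hηΦ, hact0]
      ring
    have e2 : D.act (Φ Y) (η X) - η (D.bracket (Φ Y) X) = D.dOne η (Φ Y) X := by
      simp only [VFCalc.dOne, hηΦ, hact0]
      ring
    rw [e1, e2, hdη, hdη]
    have gΦΦ : ∀ A B, D.g (Φ (Φ A)) B = -D.g A B + η A * D.g ξ B := by
      intro A B
      rw [hΦ2, D.g_addL, hgnegL, D.g_smulL]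
    have e3 : T ξ (Φ Y) X = T ξ (Φ X) Y := by
      rw [hTswap23 ξ (Φ Y) X, hTmove X Y]
    rw [gΦΦ, gΦΦ, e3, hη X, hη Y, D.g_symm Y X]
    ring
  · intro X
    simp only [VFCalc.dTOne]
    rw [← hTξ, hdη, hΦξ, hg0L, hT12eq]
    ring
  · intro X
    rw [hdη, hΦξ, hg0L, hT12eq]
    ring
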